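/- Let F be an F∞-field and let S be a nonempty subset of F \ {0} such that whenever x, y ∈ S, then x·y⁻¹ ∈ S, x·y ∈ S, and λx + μy ∈ S for every λ, μ ∈ F with λ + μ = 1. Then the set C = {(a,b) : a ≠ 0, b ≠ 0, a·b⁻¹ ∈ S} ∪ {(0,0)} is a congruence on F. -/
import Mathlib


class FinfModule (M : Type*) extends Zero M, Neg M, Add M where
  add_assoc : ∀ a b c : M, a + b + c = a + (b + c)
  add_comm : ∀ a b : M, a + b = b + a
  add_idem : ∀ a : M, a + a = a
  add_neg : ∀ a : M, a + -a = 0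
  neg_add : ∀ a b : M, -(a + b) = -a + -b
  neg_neg : ∀ a : M, - -a = a

class FinfAlgebra (A : Type*) extends FinfModule A, Mul A where
  mul_assoc : ∀ a b c : A, a * b * c = a * (b * c)
  mul_zero : ∀ a : A, a * 0 = 0
  zero_mul : ∀ a : A, 0 * a = 0
  neg_mul : ∀ a b : A, -a * b = -(a * b)
  mul_neg : ∀ a b : A, a * -b = -(a * b)
  left_distrib : ∀ a b c : A, a * (b + c) = a * b + a * c
  right_distrib : ∀ a b c : A, (a + b) * c = a * c + b * c

class FinfUnitalAlgebra (A : Type*) extends FinfAlgebra A, One A where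
  one_mul : ∀ a : A, 1 * a = a
  mul_one : ∀ a : A, a * 1 = a

class FinfCommAlgebra (A : Type*) extends FinfUnitalAlgebra A where
  mul_comm : ∀ a b : A, a * b = b * a

structure FinfModCong (M : Type*) [FinfModule M] where
  rel : M → M → Prop
  refl : ∀ a : M, rel a a
  symm : ∀ {a b : M}, rel a b → rel b a
  trans : ∀ {a b c : M}, rel a b → rel b c → rel a c
  add_compat : ∀ {a b : M} (c : M), rel a b → rel (a + c) (b + c)
  neg_compat : ∀ {a b : M}, rel a b → rel (-a) (-b)

structure FinfCong (A : Type*) [FinfAlgebra A] extends FinfModCong A where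
  mul_compat : ∀ {a b : A} (c : A), rel a b → rel (a * c) (b * c)

section Aux

variable {F : Type*} [FinfCommAlgebra F]

instance finfCommMonoid : CommMonoid F where
  mul_assoc := FinfAlgebra.mul_assoc
  one_mul := FinfUnitalAlgebra.one_mul
  mul_one := FinfUnitalAlgebra.mul_one
  mul_comm := FinfCommAlgebra.mul_comm

lemma finf_zero_mul (a : F) : (0 : F) * a = 0 := FinfAlgebra.zero_mul a
lemma finf_mul_zero (a : F) : a * (0 : F) = 0 := FinfAlgebra.mul_zero a

lemma finf_zero_add (x : F) : (0 : F) + x = 0 := by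
  have h1 : x + -x = (0 : F) := FinfModule.add_neg x
  calc (0:F) + x = (x + -x) + x := by rw [h1]
    _ = (x + x) + -x := by
        rw [FinfModule.add_assoc, FinfModule.add_assoc, FinfModule.add_comm (-x) x]
    _ = x + -x := by rw [FinfModule.add_idem]
    _ = 0 := h1

lemma finf_neg_zero : (-0 : F) = 0 := by
  have h : (0 : F) + -0 = 0 := FinfModule.add_neg 0
  calc (-0 : F) = -(0 + -0) := by rw [h]
    _ = -0 + - -0 := FinfModule.neg_add 0 (-0)
    _ = -0 + 0 := by rw [FinfModule.neg_neg]
    _ = 0 + -0 := FinfModule.add_comm _ _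
    _ = 0 := h

lemma finf_neg_mul_neg (a b : F) : (-a) * (-b) = a * b := by
  rw [FinfAlgebra.neg_mul, FinfAlgebra.mul_neg, FinfModule.neg_neg]

end Aux

theorem stmt8 {F : Type*} [FinfCommAlgebra F]
    (hF : ∀ a : F, a ≠ 0 → ∃ b : F, a * b = 1)
    (S : Set F) (hS : S.Nonempty) (hS0 : (0 : F) ∉ S)
    (hdiv : ∀ x ∈ S, ∀ y ∈ S, ∀ z : F, y * z = 1 → x * z ∈ S)
    (hmul : ∀ x ∈ S, ∀ y ∈ S, x * y ∈ S)
    (hconv : ∀ x ∈ S, ∀ y ∈ S, ∀ l m : F, l + m = 1 → l * x + m * y ∈ S) :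
    ∃ C : FinfCong F, ∀ a b : F,
      C.rel a b ↔ ((a ≠ 0 ∧ b ≠ 0 ∧ ∃ z : F, b * z = 1 ∧ a * z ∈ S) ∨
        (a = 0 ∧ b = 0)) := by
  set R : F → F → Prop := fun a b =>
    ((a ≠ 0 ∧ b ≠ 0 ∧ ∃ z : F, b * z = 1 ∧ a * z ∈ S) ∨ (a = 0 ∧ b = 0)) with hR
  -- 1 ∈ S
  obtain ⟨s, hs⟩ := hS
  have hsne : s ≠ 0 := fun h => hS0 (h ▸ hs)
  obtain ⟨t, hst⟩ := hF s hsne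
  have h1S : (1 : F) ∈ S := hst ▸ hdiv s hs s hs t hst
  -- reflexivity
  have hrefl : ∀ a : F, R a a := by
    intro a
    by_cases ha : a = 0
    · exact Or.inr ⟨ha, ha⟩
    · obtain ⟨z, hz⟩ := hF a ha
      exact Or.inl ⟨ha, ha, z, hz, hz ▸ h1S⟩
  -- symmetry
  have hsymm : ∀ {a b : F}, R a b → R b a := by
    intro a b hab
    rcases hab with ⟨ha, hb, z, hz, hzS⟩ | ⟨ha, hb⟩
    · obtain ⟨w, hw⟩ := hF a ha
      refine Or.inl ⟨hb, ha, w, hw, ?_⟩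
      have key : (a * z) * (b * w) = 1 := by
        calc (a * z) * (b * w) = (a * w) * (b * z) := by
              simp [mul_comm, mul_left_comm, mul_assoc]
          _ = 1 := by rw [hw, hz, one_mul]
      have := hdiv 1 h1S (a * z) hzS (b * w) key
      rwa [one_mul] at this
    · exact Or.inr ⟨hb, ha⟩
  -- transitivity
  have htrans : ∀ {a b c : F}, R a b → R b c → R a c := by
    intro a b c hab hbc
    rcases hab with ⟨ha, hb, z, hz, hzS⟩ | ⟨ha, hb⟩
    · rcases hbc with ⟨hb', hc, w, hw, hwS⟩ | ⟨hb', hc⟩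
      · refine Or.inl ⟨ha, hc, w, hw, ?_⟩
        have key : (a * z) * (b * w) = a * w := by
          calc (a * z) * (b * w) = (a * w) * (b * z) := by
                simp [mul_comm, mul_left_comm, mul_assoc]
            _ = a * w := by rw [hz, mul_one]
        exact key ▸ hmul (a * z) hzS (b * w) hwS
      · exact absurd hb' hb
    · rcases hbc with ⟨hb', _, _⟩ | ⟨hb', hc⟩
      · exact absurd hb hb'
      · exact Or.inr ⟨ha, hc⟩
  -- key lemma for add_compat
  have hkey : ∀ a b c : F, a ≠ 0 → (∃ z : F, b * z = 1 ∧ a * z ∈ S) →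
      ∀ u : F, (b + c) * u = 1 → (a + c) * u ∈ S := by
    intro a b c ha ⟨z, hz, hzS⟩ u hu
    have h2 : (b * u) + (c * u) = 1 := by
      rw [← FinfAlgebra.right_distrib, hu]
    have h3 : (a + c) * u = (b * u) * (a * z) + (c * u) * 1 := by
      have e1 : (b * u) * (a * z) = a * u := by
        calc (b * u) * (a * z) = (a * u) * (b * z) := by
              simp [mul_comm, mul_left_comm, mul_assoc]
          _ = a * u := by rw [hz, mul_one]
      rw [e1, mul_one, FinfAlgebra.right_distrib]
    rw [h3]
    exact hconv (a * z) hzS 1 h1S (b * u) (c * u) h2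
  -- add_compat
  have hadd : ∀ {a b : F} (c : F), R a b → R (a + c) (b + c) := by
    intro a b c hab
    rcases hab with ⟨ha, hb, z, hz, hzS⟩ | ⟨ha, hb⟩
    · -- a, b nonzero
      have hba : ∃ w : F, a * w = 1 ∧ b * w ∈ S := by
        rcases hsymm (Or.inl ⟨ha, hb, z, hz, hzS⟩) with ⟨_, _, w, hw, hwS⟩ | ⟨h0, _⟩
        · exact ⟨w, hw, hwS⟩
        · exact absurd h0 hb
      by_cases hac : a + c = 0
      · -- claim b + c = 0
        by_cases hbc : b + c = 0
        · exact Or.inr ⟨hac, hbc⟩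
        · exfalso
          obtain ⟨u, hu⟩ := hF (b + c) hbc
          have := hkey a b c ha ⟨z, hz, hzS⟩ u hu
          rw [hac, finf_zero_mul] at this
          exact hS0 this
      · by_cases hbc : b + c = 0
        · exfalso
          obtain ⟨u, hu⟩ := hF (a + c) hac
          have := hkey b a c hb hba u hu
          rw [hbc, finf_zero_mul] at this
          exact hS0 this
        · obtain ⟨u, hu⟩ := hF (b + c) hbc
          exact Or.inl ⟨hac, hbc, u, hu, hkey a b c ha ⟨z, hz, hzS⟩ u hu⟩
    · subst ha; subst hb
      rw [finf_zero_add]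
      exact hrefl 0
  -- neg_compat
  have hneg : ∀ {a b : F}, R a b → R (-a) (-b) := by
    intro a b hab
    rcases hab with ⟨ha, hb, z, hz, hzS⟩ | ⟨ha, hb⟩
    · have hna : -a ≠ 0 := fun h => ha (by rw [← FinfModule.neg_neg a, h, finf_neg_zero])
      have hnb : -b ≠ 0 := fun h => hb (by rw [← FinfModule.neg_neg b, h, finf_neg_zero])
      refine Or.inl ⟨hna, hnb, -z, ?_, ?_⟩
      · rw [finf_neg_mul_neg, hz]
      · rw [finf_neg_mul_neg]; exact hzS
    · subst ha; subst hb
      rw [finf_neg_zero]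
      exact hrefl 0
  -- mul_compat
  have hmulc : ∀ {a b : F} (c : F), R a b → R (a * c) (b * c) := by
    intro a b c hab
    rcases hab with ⟨ha, hb, z, hz, hzS⟩ | ⟨ha, hb⟩
    · by_cases hc : c = 0
      · subst hc
        rw [finf_mul_zero, finf_mul_zero]
        exact hrefl 0
      · obtain ⟨v, hv⟩ := hF c hc
        have hac : a * c ≠ 0 := by
          intro h
          apply ha
          calc a = a * (c * v) := by rw [hv, mul_one]
            _ = (a * c) * v := (mul_assoc a c v).symm
            _ = 0 := by rw [h, finf_zero_mul]
        have hbc : b * c ≠ 0 := by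
          intro h
          apply hb
          calc b = b * (c * v) := by rw [hv, mul_one]
            _ = (b * c) * v := (mul_assoc b c v).symm
            _ = 0 := by rw [h, finf_zero_mul]
        refine Or.inl ⟨hac, hbc, z * v, ?_, ?_⟩
        · have e : (b * c) * (z * v) = (b * z) * (c * v) := by
            simp [mul_comm, mul_left_comm, mul_assoc]
          rw [e, hz, hv, one_mul]
        · have : (a * c) * (z * v) = a * z := by
            calc (a * c) * (z * v) = (a * z) * (c * v) := by
                  simp [mul_comm, mul_left_comm, mul_assoc]
              _ = a * z := by rw [hv, mul_one]
          rw [this]; exact hzS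
    · subst ha; subst hb
      rw [finf_zero_mul]
      exact hrefl 0
  exact ⟨⟨⟨R, hrefl, hsymm, htrans, hadd, hneg⟩, hmulc⟩, fun a b => Iff.rfl⟩
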